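/- The Metropolis-adjusted step with proposal Φ and rejection by momentum flip preserves the equilibrium distribution μ: for every measurable set A ⊆ Ω, ∫_Ω [ a(x)·1_A(Φ(x)) + (1 − a(x))·1_A(R(x)) ] μ(dx) = μ(A). -/

import Mathlib

open MeasureTheory

/-- The Gibbs (equilibrium) probability measure with density `Z⁻¹ e^{-βH}`
with respect to Lebesgue measure on phase space. -/
noncomputable def gibbs {ν : ℕ} (β : ℝ)
    (H : (Fin ν → ℝ) × (Fin ν → ℝ) → ℝ) :
    Measure ((Fin ν → ℝ) × (Fin ν → ℝ)) :=
  volume.withDensity fun x =>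
    ENNReal.ofReal ((∫ y, Real.exp (-β * H y))⁻¹ * Real.exp (-β * H x))

/-- The Metropolis acceptance probability `a(x) = min(1, e^{-β(H(Φx) - H(x))})`. -/
noncomputable def accept {ν : ℕ} (β : ℝ)
    (H : (Fin ν → ℝ) × (Fin ν → ℝ) → ℝ)
    (Φ : (Fin ν → ℝ) × (Fin ν → ℝ) → (Fin ν → ℝ) × (Fin ν → ℝ))
    (x : (Fin ν → ℝ) × (Fin ν → ℝ)) : ℝ :=
  min 1 (Real.exp (-β * (H (Φ x) - H x)))

/-- The momentum-flip map `R(q,p) = (q,-p)`. -/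
def momentumFlip {ν : ℕ} (x : (Fin ν → ℝ) × (Fin ν → ℝ)) :
    (Fin ν → ℝ) × (Fin ν → ℝ) :=
  (x.1, -x.2)

/-- Phase space. -/
abbrev MetropolisAux.OM (ν : ℕ) := (Fin ν → ℝ) × (Fin ν → ℝ)

/-- The Metropolis-adjusted step with proposal `Φ` and rejection by momentum flip
preserves the equilibrium distribution `μ`. -/
theorem metropolis_step_preserves_gibbs
    (ν : ℕ) (β : ℝ) (hβ : 0 < β)
    (H : (Fin ν → ℝ) × (Fin ν → ℝ) → ℝ) (hHmeas : Measurable H)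
    (hHint : Integrable (fun x => Real.exp (-β * H x)) volume)
    (hHR : ∀ x, H (momentumFlip x) = H x)
    (Φ : (Fin ν → ℝ) × (Fin ν → ℝ) → (Fin ν → ℝ) × (Fin ν → ℝ))
    (hΦmeas : Measurable Φ)
    (hΦvol : Measure.map Φ volume = volume)
    (hΦrev : Φ ∘ momentumFlip ∘ Φ ∘ momentumFlip = id) :
    ∀ A : Set ((Fin ν → ℝ) × (Fin ν → ℝ)), MeasurableSet A →
      ∫ x, (accept β H Φ x * A.indicator 1 (Φ x)
          + (1 - accept β H Φ x) * A.indicator 1 (momentumFlip x))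
        ∂(gibbs β H) = ((gibbs β H) A).toReal := by
  intro A hA
  set c : ℝ := (∫ y, Real.exp (-β * H y))⁻¹ with hc
  set f : MetropolisAux.OM ν → ℝ := fun x => c * Real.exp (-β * H x) with hf
  have hc0 : 0 ≤ c := inv_nonneg.2 (integral_nonneg fun y => (Real.exp_pos _).le)
  have hf0 : ∀ x, 0 ≤ f x := fun x => mul_nonneg hc0 (Real.exp_pos _).le
  have hfmeas : Measurable f := (measurable_const.mul (hHmeas.const_mul (-β)).exp)
  have hfint : Integrable f volume := hHint.const_mul c
  -- R facts
  have hRmeas : Measurable (momentumFlip (ν := ν)) :=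
    Measurable.prodMk measurable_fst measurable_snd.neg
  have hRR : ∀ x : MetropolisAux.OM ν, momentumFlip (momentumFlip x) = x := by
    intro x; simp [momentumFlip]
  have hRvol : MeasurePreserving (momentumFlip (ν := ν)) volume volume := by
    have h : MeasurePreserving (Prod.map (id : (Fin ν → ℝ) → _) (Neg.neg : (Fin ν → ℝ) → _))
        ((volume : Measure (Fin ν → ℝ)).prod volume) ((volume : Measure (Fin ν → ℝ)).prod volume) :=
      (MeasurePreserving.id _).prod (Measure.measurePreserving_neg _)
    rw [Measure.volume_eq_prod]
    exact h
  have hΦpres : MeasurePreserving Φ (volume : Measure (MetropolisAux.OM ν)) volume := ⟨hΦmeas, hΦvol⟩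
  -- key consequence of reversibility : Φ ∘ R ∘ Φ = R
  have hΦRΦ : ∀ x : MetropolisAux.OM ν, Φ (momentumFlip (Φ x)) = momentumFlip x := by
    intro x
    have h := congrFun hΦrev (momentumFlip x)
    simpa [Function.comp, hRR] using h
  -- S = R ∘ Φ is a measure-preserving involution
  set S : MetropolisAux.OM ν → MetropolisAux.OM ν := fun x => momentumFlip (Φ x) with hS
  have hSinv : ∀ x, S (S x) = x := by
    intro x
    show momentumFlip (Φ (momentumFlip (Φ x))) = x
    rw [hΦRΦ, hRR]
  have hSmeas : Measurable S := hRmeas.comp hΦmeas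
  have hSvol : MeasurePreserving S (volume : Measure (MetropolisAux.OM ν)) volume := hRvol.comp hΦpres
  let eqS : MetropolisAux.OM ν ≃ᵐ MetropolisAux.OM ν :=
    { toFun := S, invFun := S, left_inv := hSinv, right_inv := hSinv,
      measurable_toFun := hSmeas, measurable_invFun := hSmeas }
  let eqR : MetropolisAux.OM ν ≃ᵐ MetropolisAux.OM ν :=
    { toFun := momentumFlip, invFun := momentumFlip, left_inv := hRR, right_inv := hRR,
      measurable_toFun := hRmeas, measurable_invFun := hRmeas }
  -- conversion of gibbs integrals to volume integrals
  have key : ∀ g : MetropolisAux.OM ν → ℝ, ∫ x, g x ∂(gibbs β H) = ∫ x, f x * g x := by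
    intro g
    have hd : (fun x : MetropolisAux.OM ν => ENNReal.ofReal ((∫ y, Real.exp (-β * H y))⁻¹ * Real.exp (-β * H x)))
        = fun x => ((f x).toNNReal : ENNReal) := rfl
    have hmeas : Measurable fun x => (f x).toNNReal := hfmeas.real_toNNReal
    rw [gibbs, hd, integral_withDensity_eq_integral_smul hmeas g]
    congr 1
    ext x
    rw [NNReal.smul_def, Real.coe_toNNReal _ (hf0 x), smul_eq_mul]
  -- f is R-invariant
  have hfR : ∀ x, f (momentumFlip x) = f x := by intro x; simp [hf, hHR]
  -- the min function
  set m : MetropolisAux.OM ν → ℝ := fun x => min (f x) (f (Φ x)) with hm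
  have hfa : ∀ x, f x * accept β H Φ x = m x := by
    intro x
    have h1 : f x * Real.exp (-β * (H (Φ x) - H x)) = f (Φ x) := by
      show c * Real.exp (-β * H x) * Real.exp (-β * (H (Φ x) - H x)) = c * Real.exp (-β * H (Φ x))
      rw [mul_assoc, ← Real.exp_add]
      congr 1
      ring
    rw [accept, mul_min_of_nonneg _ _ (hf0 x), mul_one, h1]
  have hmmeas : Measurable m := hfmeas.min (hfmeas.comp hΦmeas)
  have hm0 : ∀ x, 0 ≤ m x := fun x => le_min (hf0 x) (hf0 (Φ x))
  have hmf : ∀ x, m x ≤ f x := fun x => min_le_left _ _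
  -- indicator facts
  have hind01 : ∀ y : MetropolisAux.OM ν, 0 ≤ A.indicator (1 : MetropolisAux.OM ν → ℝ) y ∧ A.indicator (1 : MetropolisAux.OM ν → ℝ) y ≤ 1 := by
    intro y
    by_cases h : y ∈ A <;> simp [Set.indicator_apply, h]
  have hindmeas : Measurable (A.indicator (1 : MetropolisAux.OM ν → ℝ)) := measurable_const.indicator hA
  set u : MetropolisAux.OM ν → ℝ := fun x => A.indicator 1 (Φ x) with hu
  set v : MetropolisAux.OM ν → ℝ := fun x => A.indicator 1 (momentumFlip x) with hv
  have humeas : Measurable u := hindmeas.comp hΦmeas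
  have hvmeas : Measurable v := hindmeas.comp hRmeas
  -- integrability of products
  have hbound : ∀ (g w : MetropolisAux.OM ν → ℝ), Measurable g → Measurable w → (∀ x, 0 ≤ g x) →
      (∀ x, g x ≤ f x) → (∀ x, 0 ≤ w x) → (∀ x, w x ≤ 1) →
      Integrable (fun x => g x * w x) volume := by
    intro g w hg hw hg0 hgf hw0 hw1
    refine Integrable.mono hfint ((hg.mul hw).aestronglyMeasurable) (ae_of_all _ fun x => ?_)
    rw [Real.norm_eq_abs, Real.norm_eq_abs, abs_of_nonneg (mul_nonneg (hg0 x) (hw0 x)),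
      abs_of_nonneg (hf0 x)]
    calc g x * w x ≤ f x * 1 :=
      mul_le_mul (hgf x) (hw1 x) (hw0 x) (hf0 x)
    _ = f x := mul_one _
  have hint_mu : Integrable (fun x => m x * u x) volume :=
    hbound m u hmmeas humeas hm0 hmf (fun x => (hind01 (Φ x)).1) (fun x => (hind01 (Φ x)).2)
  have hint_mv : Integrable (fun x => m x * v x) volume :=
    hbound m v hmmeas hvmeas hm0 hmf (fun x => (hind01 _).1) (fun x => (hind01 _).2)
  have hint_fv : Integrable (fun x => f x * v x) volume :=
    hbound f v hfmeas hvmeas hf0 (fun _ => le_rfl) (fun x => (hind01 _).1) (fun x => (hind01 _).2)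
  -- substitution with S
  have hsub1 : ∫ x, m x * u x = ∫ x, m x * v x := by
    have embS : MeasurableEmbedding S := eqS.measurableEmbedding
    have h := hSvol.integral_comp embS (fun x => m x * u x)
    have h2 : ∀ x, m (S x) * u (S x) = m x * v x := by
      intro x
      have hmS : m (S x) = m x := by
        show min (f (momentumFlip (Φ x))) (f (Φ (momentumFlip (Φ x)))) = min (f x) (f (Φ x))
        rw [hfR, hΦRΦ, hfR, min_comm]
      have huS : u (S x) = v x := by
        show A.indicator 1 (Φ (momentumFlip (Φ x))) = A.indicator 1 (momentumFlip x)
        rw [hΦRΦ]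
      rw [hmS, huS]
    calc ∫ x, m x * u x = ∫ x, m (S x) * u (S x) := h.symm
    _ = ∫ x, m x * v x := by simp_rw [h2]
  -- substitution with R
  have hsub2 : ∫ x, f x * v x = ∫ x, f x * A.indicator 1 x := by
    have embR : MeasurableEmbedding (momentumFlip (ν := ν)) := eqR.measurableEmbedding
    have h := hRvol.integral_comp embR (fun x => f x * A.indicator 1 x)
    have h2 : ∀ x : MetropolisAux.OM ν, f (momentumFlip x) * A.indicator (1 : MetropolisAux.OM ν → ℝ) (momentumFlip x) = f x * v x := by
      intro x; rw [hfR]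
    calc ∫ x, f x * v x = ∫ x, f (momentumFlip x) * A.indicator 1 (momentumFlip x) := by
          simp_rw [h2]
    _ = ∫ x, f x * A.indicator 1 x := h
  -- assemble
  rw [key, ← measureReal_def, ← integral_indicator_one hA, key]
  have hptw : ∀ x : MetropolisAux.OM ν, f x * (accept β H Φ x * A.indicator 1 (Φ x)
      + (1 - accept β H Φ x) * A.indicator 1 (momentumFlip x))
      = m x * u x + (f x * v x - m x * v x) := by
    intro x
    have := hfa x
    have : f x * (accept β H Φ x * u x + (1 - accept β H Φ x) * v x)
        = (f x * accept β H Φ x) * u x + (f x * v x - (f x * accept β H Φ x) * v x) := by ring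
    rw [hu, hv] at this ⊢
    rw [this, hfa x]
  simp_rw [hptw]
  have hint_sub : Integrable (fun x => f x * v x - m x * v x) volume := hint_fv.sub hint_mv
  rw [integral_add hint_mu hint_sub, integral_sub hint_fv hint_mv, hsub1]
  rw [← hsub2]
  ring
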